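/- If (v,x) ∈ O_{(α;β)} is distinguished, then either (1) α = ∅ and β = (n), or (2) writing α = (α_1,…,α_k) and β = (β_1,…,β_k) (padding β with zeros to length k = ℓ(α)), one has α_1 > α_2 > … > α_k > 0 and β_1 > β_2 > … > β_k ≥ 0. -/

import Mathlib

set_option linter.unusedSectionVars false

namespace DistPairs

variable {F : Type} [Field F] {V : Type} [AddCommGroup V] [Module F V]
variable {k : ℕ} {α β : ℕ → ℕ}

lemma fcongr (f : (Σ i : Fin k, Fin (α i + β i)) → V) (i : Fin k) {a a' : ℕ} (h : a = a')
    {ha : a < α i + β i} {ha' : a' < α i + β i} : f ⟨i, ⟨a, ha⟩⟩ = f ⟨i, ⟨a', ha'⟩⟩ := by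
  subst h; rfl

noncomputable def uvec (b : Module.Basis (Σ i : Fin k, Fin (α i + β i)) F V) (s r : Fin k) (d : ℕ)
    (p : Σ i : Fin k, Fin (α i + β i)) : V :=
  if h : p.1 = r ∧ d ≤ (p.2 : ℕ) ∧ (p.2 : ℕ) - d < α s + β s
  then b ⟨s, ⟨(p.2 : ℕ) - d, h.2.2⟩⟩ else 0

lemma uvec_of_ne (b : Module.Basis (Σ i : Fin k, Fin (α i + β i)) F V) (s r : Fin k) (d : ℕ)
    (p : Σ i : Fin k, Fin (α i + β i)) (hp : p.1 ≠ r) : uvec b s r d p = 0 := by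
  rw [uvec, dif_neg]; tauto

noncomputable def phi (b : Module.Basis (Σ i : Fin k, Fin (α i + β i)) F V) (s r : Fin k) (d : ℕ) :
    V →ₗ[F] V := Module.Basis.constr b F (uvec b s r d)

lemma phi_basis (b : Module.Basis (Σ i : Fin k, Fin (α i + β i)) F V) (s r : Fin k) (d : ℕ)
    (p : Σ i : Fin k, Fin (α i + β i)) : phi b s r d (b p) = uvec b s r d p :=
  Module.Basis.constr_basis b F _ p

lemma phi_phi (b : Module.Basis (Σ i : Fin k, Fin (α i + β i)) F V) (s r : Fin k) (d : ℕ)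
    (hrs : r ≠ s) (w : V) : phi b s r d (phi b s r d w) = 0 := by
  have h0 : ∀ p, phi b s r d (uvec b s r d p) = 0 := by
    intro p
    rw [uvec]
    split
    · rw [phi_basis, uvec_of_ne]
      exact fun h => hrs h.symm
    · simp
  have hcomp : (phi b s r d) ∘ₗ (phi b s r d) = 0 := by
    apply Module.Basis.ext b
    intro p
    simp only [LinearMap.comp_apply, LinearMap.zero_apply, phi_basis]
    exact h0 p
  have := LinearMap.congr_fun hcomp w
  simpa using this

noncomputable def ebasis (b : Module.Basis (Σ i : Fin k, Fin (α i + β i)) F V) (s r : Fin k) (d : ℕ)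
    (hrs : r ≠ s) : Module.Basis (Σ i : Fin k, Fin (α i + β i)) F V :=
  b.map (LinearEquiv.ofLinear (LinearMap.id + phi b s r d) (LinearMap.id - phi b s r d)
    (LinearMap.ext fun w => by
      simp [LinearMap.comp_apply, map_sub, phi_phi b s r d hrs])
    (LinearMap.ext fun w => by
      simp [LinearMap.comp_apply, map_add, phi_phi b s r d hrs]))

lemma ebasis_apply (b : Module.Basis (Σ i : Fin k, Fin (α i + β i)) F V) (s r : Fin k) (d : ℕ)
    (hrs : r ≠ s) (p : Σ i : Fin k, Fin (α i + β i)) :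
    ebasis b s r d hrs p = b p + uvec b s r d p := by
  simp [ebasis, Module.Basis.map_apply, LinearEquiv.ofLinear_apply, phi_basis]

lemma ebasis_of_ne (b : Module.Basis (Σ i : Fin k, Fin (α i + β i)) F V) (s r : Fin k) (d : ℕ)
    (hrs : r ≠ s) (p : Σ i : Fin k, Fin (α i + β i)) (hp : p.1 ≠ r) :
    ebasis b s r d hrs p = b p := by
  rw [ebasis_apply, uvec_of_ne b s r d p hp, add_zero]

lemma xe_apply (b : Module.Basis (Σ i : Fin k, Fin (α i + β i)) F V)
    (x : Module.End F V)
    (hx : ∀ p : Σ i : Fin k, Fin (α i + β i), x (b p) =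
      if _ : (p.2 : ℕ) = 0 then 0
      else b ⟨p.1, ⟨(p.2 : ℕ) - 1, lt_of_le_of_lt (Nat.sub_le _ _) p.2.2⟩⟩)
    (s r : Fin k) (hrs : r ≠ s) (d : ℕ)
    (H2 : α r + β r ≤ d + (α s + β s)) (p : Σ i : Fin k, Fin (α i + β i)) :
    x (ebasis b s r d hrs p) =
      if _ : (p.2 : ℕ) = 0 then 0
      else ebasis b s r d hrs ⟨p.1, ⟨(p.2 : ℕ) - 1, lt_of_le_of_lt (Nat.sub_le _ _) p.2.2⟩⟩ := by
  obtain ⟨i, j⟩ := p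
  by_cases hir : i = r
  case neg =>
    rw [ebasis_of_ne b s r d hrs _ hir, hx]
    split_ifs with h0
    · rfl
    · rw [ebasis_of_ne b s r d hrs _ hir]
  case pos =>
    subst hir
    rw [ebasis_apply, map_add, hx]
    by_cases h0 : (j : ℕ) = 0
    · rw [dif_pos h0, dif_pos h0, zero_add, uvec]
      split_ifs with hP
      · rw [hx, dif_pos]
        show (j : ℕ) - d = 0
        omega
      · exact map_zero x
    · rw [dif_neg h0, dif_neg h0, ebasis_apply]
      congr 1
      rw [uvec, uvec]
      by_cases hP : d ≤ (j : ℕ) ∧ (j : ℕ) - d < α s + β s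
      · rw [dif_pos ⟨rfl, hP⟩, hx]
        by_cases hjd : (j : ℕ) - d = 0
        · rw [dif_pos hjd, dif_neg]
          rintro ⟨-, h1, h2⟩
          simp only [Fin.val_mk] at h1 h2
          omega
        · rw [dif_neg hjd, dif_pos]
          · apply fcongr
            show (j : ℕ) - d - 1 = (j : ℕ) - 1 - d
            omega
          · refine ⟨rfl, ?_, ?_⟩ <;> simp only [Fin.val_mk] <;> omega
      · rw [dif_neg (by tauto), map_zero, dif_neg]
        rintro ⟨-, h1, h2⟩
        simp only [Fin.val_mk] at h1 h2
        have hj2 := j.2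
        omega

lemma span_stable (x : Module.End F V) {S : Set V}
    (h : ∀ w ∈ S, x w ∈ Submodule.span F S) :
    ∀ w ∈ Submodule.span F S, x w ∈ Submodule.span F S := by
  intro w hw
  have hle : Submodule.span F S ≤ Submodule.comap x (Submodule.span F S) :=
    Submodule.span_le.2 h
  exact hle hw

lemma compl_spans (e : Module.Basis (Σ i : Fin k, Fin (α i + β i)) F V) (s : Fin k) :
    IsCompl (Submodule.span F (⇑e '' {p : Σ i : Fin k, Fin (α i + β i) | p.1 ≠ s}))
      (Submodule.span F (⇑e '' {p : Σ i : Fin k, Fin (α i + β i) | p.1 = s})) := by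
  constructor
  · exact e.linearIndependent.disjoint_span_image (by
      rw [Set.disjoint_left]; intro p hp hp'; exact hp hp')
  · rw [codisjoint_iff, ← Submodule.span_union, ← Set.image_union]
    have hU : ({p : Σ i : Fin k, Fin (α i + β i) | p.1 ≠ s} ∪ {p | p.1 = s}) = Set.univ := by
      ext p; simp [em']
    rw [hU, Set.image_univ, Module.Basis.span_eq]

lemma stableW (b : Module.Basis (Σ i : Fin k, Fin (α i + β i)) F V)
    (x : Module.End F V)
    (hx : ∀ p : Σ i : Fin k, Fin (α i + β i), x (b p) =
      if _ : (p.2 : ℕ) = 0 then 0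
      else b ⟨p.1, ⟨(p.2 : ℕ) - 1, lt_of_le_of_lt (Nat.sub_le _ _) p.2.2⟩⟩)
    (s r : Fin k) (hrs : r ≠ s) (d : ℕ)
    (H2 : α r + β r ≤ d + (α s + β s)) (P : Fin k → Prop) :
    ∀ w ∈ Submodule.span F (⇑(ebasis b s r d hrs) '' {p : Σ i : Fin k, Fin (α i + β i) | P p.1}),
      x w ∈ Submodule.span F (⇑(ebasis b s r d hrs) '' {p : Σ i : Fin k, Fin (α i + β i) | P p.1}) := by
  apply span_stable
  rintro w ⟨⟨i, j⟩, hi, rfl⟩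
  rw [xe_apply b x hx s r hrs d H2]
  split_ifs
  · exact Submodule.zero_mem _
  · exact Submodule.subset_span
      ⟨⟨i, ⟨(j : ℕ) - 1, lt_of_le_of_lt (Nat.sub_le _ _) j.2⟩⟩, hi, rfl⟩

lemma gradeW (b : Module.Basis (Σ i : Fin k, Fin (α i + β i)) F V)
    (s r : Fin k) (hrs : r ≠ s) (d : ℕ)
    (H1 : d < α r + β r → (α r : ℤ) = α s + d) (P : Fin k → Prop) :
    Submodule.span F (⇑(ebasis b s r d hrs) '' {p : Σ i : Fin k, Fin (α i + β i) | P p.1}) =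
      ⨆ δ : ℤ, (Submodule.span F
          (⇑(ebasis b s r d hrs) '' {p : Σ i : Fin k, Fin (α i + β i) | P p.1}) ⊓
        Submodule.span F {w : V | ∃ p : Σ i : Fin k, Fin (α i + β i),
          w = b p ∧ (α p.1 : ℤ) - ((p.2 : ℕ) + 1) = δ}) := by
  refine le_antisymm ?_ (iSup_le fun δ => inf_le_left)
  refine Submodule.span_le.2 ?_
  rintro w ⟨⟨i, j⟩, hi, rfl⟩
  have h1 : ebasis b s r d hrs ⟨i, j⟩ ∈
      Submodule.span F (⇑(ebasis b s r d hrs) '' {p : Σ i : Fin k, Fin (α i + β i) | P p.1}) :=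
    Submodule.subset_span ⟨⟨i, j⟩, hi, rfl⟩
  have h2 : ebasis b s r d hrs ⟨i, j⟩ ∈
      Submodule.span F {w : V | ∃ p : Σ i : Fin k, Fin (α i + β i),
        w = b p ∧ (α p.1 : ℤ) - ((p.2 : ℕ) + 1) = ((α i : ℤ) - ((j : ℕ) + 1))} := by
    rw [ebasis_apply]
    refine Submodule.add_mem _ (Submodule.subset_span ⟨⟨i, j⟩, rfl, rfl⟩) ?_
    rw [uvec]
    split_ifs with h
    · have hir : i = r := h.1
      have hdj : d ≤ (j : ℕ) := h.2.1
      have hn : (j : ℕ) - d < α s + β s := h.2.2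
      refine Submodule.subset_span ⟨⟨s, ⟨(j : ℕ) - d, hn⟩⟩, rfl, ?_⟩
      have hai : α (i : ℕ) = α (r : ℕ) := by rw [hir]
      have hbi : β (i : ℕ) = β (r : ℕ) := by rw [hir]
      have hj2 : (j : ℕ) < α (i : ℕ) + β (i : ℕ) := j.2
      have hd := H1 (by omega)
      show (α (s : ℕ) : ℤ) - ((((j : ℕ) - d : ℕ) : ℤ) + 1) = (α (i : ℕ) : ℤ) - ((j : ℕ) + 1)
      omega
    · exact Submodule.zero_mem _
  exact Submodule.mem_iSup_of_mem ((α i : ℤ) - ((j : ℕ) + 1)) (Submodule.mem_inf.2 ⟨h1, h2⟩)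

end DistPairs

namespace DistPairs

variable {F : Type} [Field F] {V : Type} [AddCommGroup V] [Module F V]
variable {k : ℕ} {α β : ℕ → ℕ}

lemma vmem (b : Module.Basis (Σ i : Fin k, Fin (α i + β i)) F V)
    (s r : Fin k) (hrs : r ≠ s) (d : ℕ)
    (H3 : α s ≤ α r) (H4 : α r - α s ≤ d) (H5 : 0 < α s → d = α r - α s) :
    (∑ i : Fin k, if h : 0 < α i then b ⟨i, ⟨α i - 1, Nat.lt_of_lt_of_le (Nat.sub_lt h Nat.one_pos) (Nat.le_add_right _ _)⟩⟩ else 0) ∈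
      Submodule.span F (⇑(ebasis b s r d hrs) ''
        {p : Σ i : Fin k, Fin (α i + β i) | p.1 ≠ s}) := by
  classical
  set W := Submodule.span F (⇑(ebasis b s r d hrs) ''
    {p : Σ i : Fin k, Fin (α i + β i) | p.1 ≠ s}) with hW
  set f : Fin k → V := fun i => if h : 0 < α i then b ⟨i, ⟨α i - 1, by omega⟩⟩ else 0 with hf
  have h1 := Finset.sum_erase_add Finset.univ f (Finset.mem_univ s)
  have h2 := Finset.sum_erase_add (Finset.univ.erase s) f
    (Finset.mem_erase.2 ⟨hrs, Finset.mem_univ r⟩)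
  have hsplit : ∑ i : Fin k, f i =
      (∑ i ∈ (Finset.univ.erase s).erase r, f i) + (f r + f s) := by
    rw [← h1, ← h2, add_assoc]
  rw [hsplit]
  refine Submodule.add_mem _ (Submodule.sum_mem _ fun i hi => ?_) ?_
  · obtain ⟨hir, his, -⟩ := Finset.mem_erase.1 hi |>.imp id (Finset.mem_erase.1)
    -- hir : i ≠ r, his : i ≠ s
    rw [hf]
    by_cases hαi : 0 < α i
    · simp only [dif_pos hαi]
      rw [← ebasis_of_ne b s r d hrs ⟨i, ⟨α i - 1, by omega⟩⟩ hir]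
      exact Submodule.subset_span ⟨_, his, rfl⟩
    · simp only [dif_neg hαi]
      exact Submodule.zero_mem _
  · by_cases hαr : 0 < α (r : ℕ)
    · have key : f r + f s = ebasis b s r d hrs ⟨r, ⟨α r - 1, by omega⟩⟩ := by
        rw [ebasis_apply, hf]
        simp only [dif_pos hαr]
        congr 1
        by_cases hαs : 0 < α (s : ℕ)
        · have hd := H5 hαs
          rw [dif_pos hαs, uvec, dif_pos]
          · exact fcongr b s (by simp only [Fin.val_mk]; omega)
          · exact ⟨rfl, by simp only [Fin.val_mk]; omega, by simp only [Fin.val_mk]; omega⟩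
        · rw [dif_neg hαs, uvec, dif_neg]
          rintro ⟨-, hc1, -⟩
          simp only [Fin.val_mk] at hc1
          omega
      rw [key]
      exact Submodule.subset_span ⟨_, hrs, rfl⟩
    · rw [hf]
      simp only [dif_neg hαr, dif_neg (show ¬ 0 < α (s : ℕ) by omega), add_zero]
      exact Submodule.zero_mem _

lemma aux_false
    (hrow : ∀ i : Fin k, 0 < α i + β i)
    (b : Module.Basis (Σ i : Fin k, Fin (α i + β i)) F V)
    (x : Module.End F V)
    (hx : ∀ p : Σ i : Fin k, Fin (α i + β i), x (b p) =
      if _ : (p.2 : ℕ) = 0 then 0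
      else b ⟨p.1, ⟨(p.2 : ℕ) - 1, lt_of_le_of_lt (Nat.sub_le _ _) p.2.2⟩⟩)
    (v : V)
    (hv : v = ∑ i : Fin k,
      if h : 0 < α i then b ⟨i, ⟨α i - 1, Nat.lt_of_lt_of_le (Nat.sub_lt h Nat.one_pos) (Nat.le_add_right _ _)⟩⟩ else 0)
    (hdist : ∀ V₁ V₂ : Submodule F V, IsCompl V₁ V₂ →
      (∀ w ∈ V₁, x w ∈ V₁) → (∀ w ∈ V₂, x w ∈ V₂) →
      (V₁ = ⨆ d : ℤ, (V₁ ⊓ Submodule.span F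
        {w : V | ∃ p : Σ i : Fin k, Fin (α i + β i),
          w = b p ∧ (α p.1 : ℤ) - ((p.2 : ℕ) + 1) = d})) →
      (V₂ = ⨆ d : ℤ, (V₂ ⊓ Submodule.span F
        {w : V | ∃ p : Σ i : Fin k, Fin (α i + β i),
          w = b p ∧ (α p.1 : ℤ) - ((p.2 : ℕ) + 1) = d})) →
      v ∈ V₁ →
      V₁ = ⊥ ∨ V₂ = ⊥)
    (s r : Fin k) (hrs : r ≠ s) (d : ℕ)
    (H1 : d < α r + β r → (α r : ℤ) = α s + d)
    (H2 : α r + β r ≤ d + (α s + β s))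
    (H3 : α s ≤ α r) (H4 : α r - α s ≤ d) (H5 : 0 < α s → d = α r - α s) :
    False := by
  classical
  obtain h | h := hdist
      (Submodule.span F (⇑(ebasis b s r d hrs) ''
        {p : Σ i : Fin k, Fin (α i + β i) | p.1 ≠ s}))
      (Submodule.span F (⇑(ebasis b s r d hrs) ''
        {p : Σ i : Fin k, Fin (α i + β i) | p.1 = s}))
      (compl_spans _ s)
      (stableW b x hx s r hrs d H2 (fun i => i ≠ s))
      (stableW b x hx s r hrs d H2 (fun i => i = s))
      (gradeW b s r hrs d H1 (fun i => i ≠ s))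
      (gradeW b s r hrs d H1 (fun i => i = s))
      (by rw [hv]; exact vmem b s r hrs d H3 H4 H5)
  · have hm : ebasis b s r d hrs ⟨r, ⟨0, hrow r⟩⟩ ∈
        Submodule.span F (⇑(ebasis b s r d hrs) ''
          {p : Σ i : Fin k, Fin (α i + β i) | p.1 ≠ s}) :=
      Submodule.subset_span ⟨_, hrs, rfl⟩
    rw [h] at hm
    exact (ebasis b s r d hrs).ne_zero _ ((Submodule.mem_bot F).1 hm)
  · have hm : ebasis b s r d hrs ⟨s, ⟨0, hrow s⟩⟩ ∈
        Submodule.span F (⇑(ebasis b s r d hrs) ''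
          {p : Σ i : Fin k, Fin (α i + β i) | p.1 = s}) :=
      Submodule.subset_span ⟨_, rfl, rfl⟩
    rw [h] at hm
    exact (ebasis b s r d hrs).ne_zero _ ((Submodule.mem_bot F).1 hm)

end DistPairs

open DistPairs

/-- Classification of distinguished pairs.  Let `(v,x)` have a normal basis
`b ⟨i,j⟩` of type the bipartition `(α;β)` (rows `i < k`, all nonempty), with grading
`deg b ⟨i,j⟩ = α i - (j+1)`.  If `(v,x)` is distinguished (no nontrivial decomposition
`V = V₁ ⊕ V₂` with both summands `x`-stable and stable for the grading, and `v ∈ V₁`),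
then either (1) `α = ∅` and `β = (n)`, i.e. `k = 1` and `α 0 = 0`; or (2) the parts of
`α` are strictly decreasing and positive and the parts of `β` are strictly decreasing:
`α 0 > α 1 > … > α (k-1) > 0` and `β 0 > β 1 > … > β (k-1) ≥ 0`. -/
theorem distinguished_pairs_classification
    (F : Type) [Field F] (V : Type) [AddCommGroup V] [Module F V] [FiniteDimensional F V]
    (k : ℕ) (hk : 0 < k) (α β : ℕ → ℕ) (hα : Antitone α) (hβ : Antitone β)
    (hrow : ∀ i : Fin k, 0 < α i + β i)
    (b : Module.Basis (Σ i : Fin k, Fin (α i + β i)) F V)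
    (x : Module.End F V)
    (hx : ∀ p : Σ i : Fin k, Fin (α i + β i), x (b p) =
      if _ : (p.2 : ℕ) = 0 then 0
      else b ⟨p.1, ⟨(p.2 : ℕ) - 1, lt_of_le_of_lt (Nat.sub_le _ _) p.2.2⟩⟩)
    (v : V)
    (hv : v = ∑ i : Fin k,
      if h : 0 < α i then b ⟨i, ⟨α i - 1, by omega⟩⟩ else 0)
    (hdist : ∀ V₁ V₂ : Submodule F V, IsCompl V₁ V₂ →
      (∀ w ∈ V₁, x w ∈ V₁) → (∀ w ∈ V₂, x w ∈ V₂) →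
      (V₁ = ⨆ d : ℤ, (V₁ ⊓ Submodule.span F
        {w : V | ∃ p : Σ i : Fin k, Fin (α i + β i),
          w = b p ∧ (α p.1 : ℤ) - ((p.2 : ℕ) + 1) = d})) →
      (V₂ = ⨆ d : ℤ, (V₂ ⊓ Submodule.span F
        {w : V | ∃ p : Σ i : Fin k, Fin (α i + β i),
          w = b p ∧ (α p.1 : ℤ) - ((p.2 : ℕ) + 1) = d})) →
      v ∈ V₁ →
      V₁ = ⊥ ∨ V₂ = ⊥) :
    (k = 1 ∧ α 0 = 0)
    ∨ ((∀ i : ℕ, i + 1 < k → α (i + 1) < α i ∧ β (i + 1) < β i) ∧ 0 < α (k - 1)) := by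
  classical
  by_cases hk1 : k = 1
  · by_cases h0 : α 0 = 0
    · exact Or.inl ⟨hk1, h0⟩
    · refine Or.inr ⟨fun i hi => absurd hi (by omega), ?_⟩
      rw [hk1]
      exact Nat.pos_of_ne_zero h0
  · refine Or.inr ?_
    by_contra hc
    rw [not_and_or] at hc
    rcases hc with hc | hc
    · push_neg at hc
      obtain ⟨i, hik, hab⟩ := hc
      by_cases hα' : α (i + 1) < α i
      · -- β (i+1) = β i ; take s = row i+1, r = row i, d = α i - α (i+1)
        have hβeq : β (i + 1) = β i := le_antisymm (hβ (by omega)) (hab hα')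
        refine aux_false hrow b x hx v hv hdist ⟨i + 1, hik⟩ ⟨i, by omega⟩
          (Fin.ne_of_val_ne (by simp only [Fin.val_mk]; omega)) (α i - α (i + 1)) ?_ ?_ ?_ ?_ ?_
        · intro _
          show (α i : ℤ) = (α (i + 1) : ℤ) + ((α i - α (i + 1) : ℕ) : ℤ)
          have := hα (Nat.le_succ i)
          omega
        · show α i + β i ≤ (α i - α (i + 1)) + (α (i + 1) + β (i + 1))
          have := hα (Nat.le_succ i)
          omega
        · show α (i + 1) ≤ α i
          exact hα (Nat.le_succ i)
        · show α i - α (i + 1) ≤ α i - α (i + 1)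
          exact le_rfl
        · intro _
          rfl
      · -- α (i+1) = α i ; take s = row i, r = row i+1, d = 0
        have hαeq : α (i + 1) = α i := le_antisymm (hα (by omega)) (le_of_not_gt hα')
        have hβle : β (i + 1) ≤ β i := hβ (Nat.le_succ i)
        refine aux_false hrow b x hx v hv hdist ⟨i, by omega⟩ ⟨i + 1, hik⟩
          (Fin.ne_of_val_ne (by simp only [Fin.val_mk]; omega)) 0 ?_ ?_ ?_ ?_ ?_
        · intro _
          show (α (i + 1) : ℤ) = (α i : ℤ) + ((0 : ℕ) : ℤ)
          omega
        · show α (i + 1) + β (i + 1) ≤ 0 + (α i + β i)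
          omega
        · show α i ≤ α (i + 1)
          omega
        · show α (i + 1) - α i ≤ 0
          omega
        · intro _
          show (0 : ℕ) = α (i + 1) - α i
          omega
    · -- α (k-1) = 0 ; take s = row k-1, r = row 0, d = α 0 + β 0
      have hα0 : α (k - 1) = 0 := by omega
      refine aux_false hrow b x hx v hv hdist ⟨k - 1, by omega⟩ ⟨0, by omega⟩
        (Fin.ne_of_val_ne (by simp only [Fin.val_mk]; omega)) (α 0 + β 0) ?_ ?_ ?_ ?_ ?_
      · intro h
        exact absurd h (lt_irrefl _)
      · show α 0 + β 0 ≤ (α 0 + β 0) + (α (k - 1) + β (k - 1))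
        omega
      · show α (k - 1) ≤ α 0
        omega
      · show α 0 - α (k - 1) ≤ α 0 + β 0
        omega
      · intro h
        have h' : 0 < α (k - 1) := h
        show α 0 + β 0 = α 0 - α (k - 1)
        omega
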